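/- Let n ≥ 2 and let Ψ₁(x) = ( x*/(|x|² − x_{n+1}) , |x|√(1 − |x|²)/||x|² − x_{n+1}| ) ∈ ℝ^n × ℝ, where x* = (x₁, …, x_n), defined for x ∈ ℝ^{n+1} with 0 < |x| < 1 and |x|² ≠ x_{n+1}. Then at every such x the map Ψ₁ (viewed as a map from an open subset of ℝ^{n+1} to ℝ^{n+1}) is differentiable and the absolute value of its Jacobian determinant equals |x| / ( ||x|² − x_{n+1}|^{n+1} · √(1 − |x|²) ); in particular the Jacobian determinant never vanishes on the domain of Ψ₁. -/

import Mathlib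

/-- The map `Ψ₁(x) = (x*/(|x|² − x_{n+1}), |x|√(1 − |x|²)/||x|² − x_{n+1}|)`, viewed as a map
from (an open subset of) `ℝ^{n+1}` to `ℝ^{n+1}`, with the radius stored in the last
coordinate. -/
noncomputable def Psi1 (n : ℕ) (x : EuclideanSpace ℝ (Fin (n + 1))) :
    EuclideanSpace ℝ (Fin (n + 1)) :=
  WithLp.toLp 2 fun i =>
    Fin.lastCases (‖x‖ * Real.sqrt (1 - ‖x‖ ^ 2) / |‖x‖ ^ 2 - x (Fin.last n)|)
      (fun j : Fin n => x j.castSucc / (‖x‖ ^ 2 - x (Fin.last n))) i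

open scoped BigOperators

noncomputable section

namespace S10

variable {n : ℕ}

def uu (n : ℕ) (x : Fin (n+1) → ℝ) : ℝ := ∑ i, x i ^ 2
def DD (n : ℕ) (x : Fin (n+1) → ℝ) : ℝ := uu n x - x (Fin.last n)
def phi (n : ℕ) (x : Fin (n+1) → ℝ) : Fin (n+1) → ℝ := (DD n x)⁻¹ • x
def ww (n : ℕ) (y : Fin (n+1) → ℝ) : ℝ := uu n y - (1 + y (Fin.last n))^2
def theta (n : ℕ) (y : Fin (n+1) → ℝ) : Fin (n+1) → ℝ := fun i =>
  Fin.lastCases (Real.sqrt (ww n y)) (fun j => y j.castSucc) i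

def du (n : ℕ) (z : Fin (n+1) → ℝ) : (Fin (n+1) → ℝ) →L[ℝ] ℝ :=
  ∑ i, ((2:ℝ) * z i ^ 1) • (ContinuousLinearMap.proj i :
    (Fin (n+1) → ℝ) →L[ℝ] ℝ)

lemma hasFDerivAt_uu (z : Fin (n+1) → ℝ) : HasFDerivAt (uu n) (du n z) z := by
  apply HasFDerivAt.fun_sum
  intro i _
  exact (hasDerivAt_pow 2 (z i)).comp_hasFDerivAt z
    (ContinuousLinearMap.proj i : (Fin (n+1) → ℝ) →L[ℝ] ℝ).hasFDerivAt

def dD (n : ℕ) (z : Fin (n+1) → ℝ) : (Fin (n+1) → ℝ) →L[ℝ] ℝ :=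
  du n z - ContinuousLinearMap.proj (Fin.last n)

lemma hasFDerivAt_DD (z : Fin (n+1) → ℝ) : HasFDerivAt (DD n) (dD n z) z :=
  (hasFDerivAt_uu z).sub (hasFDerivAt_apply _ z)

def dphi (n : ℕ) (z : Fin (n+1) → ℝ) : (Fin (n+1) → ℝ) →L[ℝ] (Fin (n+1) → ℝ) :=
  (DD n z)⁻¹ • ContinuousLinearMap.id ℝ _ +
    ((-(DD n z ^ 2)⁻¹) • dD n z).smulRight z

lemma hasFDerivAt_phi (z : Fin (n+1) → ℝ) (hz : DD n z ≠ 0) :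
    HasFDerivAt (phi n) (dphi n z) z := by
  have hinv : HasFDerivAt (fun y => (DD n y)⁻¹) ((-(DD n z ^ 2)⁻¹) • dD n z) z :=
    (hasDerivAt_inv hz).comp_hasFDerivAt z (hasFDerivAt_DD z)
  exact hinv.smul (hasFDerivAt_id z)

def dw (n : ℕ) (y : Fin (n+1) → ℝ) : (Fin (n+1) → ℝ) →L[ℝ] ℝ :=
  du n y - ((2:ℝ) * (1 + y (Fin.last n)) ^ 1) • ContinuousLinearMap.proj (Fin.last n)

lemma hasFDerivAt_ww (y : Fin (n+1) → ℝ) : HasFDerivAt (ww n) (dw n y) y := by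
  refine (hasFDerivAt_uu y).sub ?_
  have h1 : HasFDerivAt (fun x : Fin (n+1) → ℝ => 1 + x (Fin.last n))
      ((ContinuousLinearMap.proj (Fin.last n) : (Fin (n+1) → ℝ) →L[ℝ] ℝ)) y :=
    HasFDerivAt.const_add 1 (hasFDerivAt_apply (Fin.last n) y)
  have h2 := (hasDerivAt_pow 2 (1 + y (Fin.last n))).comp_hasFDerivAt y h1
  refine h2.congr_fderiv ?_
  simp

def dtheta (n : ℕ) (y : Fin (n+1) → ℝ) : (Fin (n+1) → ℝ) →L[ℝ] (Fin (n+1) → ℝ) :=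
  ContinuousLinearMap.pi (fun i =>
    Fin.lastCases ((1 / (2 * Real.sqrt (ww n y))) • dw n y)
      (fun j => ContinuousLinearMap.proj j.castSucc) i)

lemma hasFDerivAt_theta (y : Fin (n+1) → ℝ) (hy : ww n y ≠ 0) :
    HasFDerivAt (theta n) (dtheta n y) y := by
  apply hasFDerivAt_pi.2
  intro i
  induction i using Fin.lastCases with
  | last =>
      simpa [theta, dtheta] using (hasFDerivAt_ww y).sqrt hy
  | cast j =>
      simpa [theta, dtheta] using hasFDerivAt_apply j.castSucc y

lemma du_apply (z v : Fin (n+1) → ℝ) : du n z v = ∑ i, 2 * z i * v i := by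
  simp [du]

lemma dD_apply (z v : Fin (n+1) → ℝ) :
    dD n z v = (∑ i, 2 * z i * v i) - v (Fin.last n) := by
  simp [dD, du_apply]

lemma det_dphi (z : Fin (n+1) → ℝ) (hz : DD n z ≠ 0) :
    LinearMap.det ((dphi n z : (Fin (n+1) → ℝ) →L[ℝ] (Fin (n+1) → ℝ)) :
      (Fin (n+1) → ℝ) →ₗ[ℝ] (Fin (n+1) → ℝ)) = -(uu n z) / DD n z ^ (n+2) := by
  set d := DD n z with hd
  set q : Fin (n+1) → ℝ := fun j => -d⁻¹ * (2 * z j - if j = Fin.last n then 1 else 0) with hq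
  have hM : LinearMap.toMatrix' ((dphi n z :
      (Fin (n+1) → ℝ) →L[ℝ] (Fin (n+1) → ℝ)) : (Fin (n+1) → ℝ) →ₗ[ℝ] _) =
      d⁻¹ • (1 + Matrix.replicateCol (Fin 1) z * Matrix.replicateRow (Fin 1) q) := by
    ext i j
    have hb : dD n z (Pi.single j (1:ℝ)) =
        2 * z j - (if j = Fin.last n then 1 else 0) := by
      rw [dD_apply]
      simp [Pi.single_apply, mul_ite, Finset.sum_ite_eq', eq_comm]
    simp only [LinearMap.toMatrix'_apply, ContinuousLinearMap.coe_coe, dphi,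
      ContinuousLinearMap.add_apply, ContinuousLinearMap.smul_apply,
      ContinuousLinearMap.id_apply, ContinuousLinearMap.smulRight_apply,
      Matrix.smul_apply, Matrix.add_apply, Matrix.one_apply,
      Matrix.mul_apply, Matrix.replicateRow_apply, Matrix.replicateCol_apply, Fin.sum_univ_one,
      Matrix.of_apply, Pi.add_apply, Pi.smul_apply, smul_eq_mul, hb]
    rw [hq]
    by_cases h : i = j <;>
      simp [h, ← hd] <;> field_simp <;> ring
  rw [← LinearMap.det_toMatrix', hM, Matrix.det_smul]
  erw [Matrix.det_one_add_replicateCol_mul_replicateRow]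
  have hdot : dotProduct q z = -d⁻¹ * (2 * uu n z - z (Fin.last n)) := by
    rw [dotProduct]
    simp only [hq, mul_assoc, ← Finset.mul_sum]
    congr 1
    simp only [sub_mul, ite_mul, one_mul, zero_mul]
    rw [Finset.sum_sub_distrib, Finset.sum_ite_eq' Finset.univ (Fin.last n) z]
    simp [uu, Finset.mul_sum, pow_two, mul_assoc]
  rw [hdot]
  have hud : uu n z = d + z (Fin.last n) := by rw [hd, DD]; ring
  rw [hud]
  simp only [Fintype.card_fin, smul_eq_mul, inv_pow]
  field_simp
  ring

lemma det_dtheta (y : Fin (n+1) → ℝ) :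
    LinearMap.det ((dtheta n y : (Fin (n+1) → ℝ) →L[ℝ] (Fin (n+1) → ℝ)) :
      (Fin (n+1) → ℝ) →ₗ[ℝ] (Fin (n+1) → ℝ)) = -(Real.sqrt (ww n y))⁻¹ := by
  set s : ℝ := Real.sqrt (ww n y) with hs
  set N := LinearMap.toMatrix' ((dtheta n y :
      (Fin (n+1) → ℝ) →L[ℝ] (Fin (n+1) → ℝ)) : (Fin (n+1) → ℝ) →ₗ[ℝ] (Fin (n+1) → ℝ)) with hN
  have hc : ∀ i : Fin n, (Fin.castAdd 1 i) = Fin.castSucc i := fun _ => rfl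
  have hnat : (Fin.natAdd n (0 : Fin 1)) = Fin.last n := by
    ext; simp [Fin.last]
  have hNb : N.submatrix finSumFinEquiv finSumFinEquiv =
      Matrix.fromBlocks 1 0
        (Matrix.of fun (_ : Fin 1) j => N (Fin.last n) (Fin.castSucc j))
        (Matrix.of fun _ _ => N (Fin.last n) (Fin.last n)) := by
    ext i j
    cases i with
    | inl i =>
      cases j with
      | inl j =>
        simp [N, dtheta, Matrix.submatrix_apply, hc, hnat, Matrix.one_apply,
          Fin.castSucc_inj, Pi.single_apply, Subsingleton.elim _ (0 : Fin 1)]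
      | inr j =>
        simp [N, dtheta, Matrix.submatrix_apply, hc, hnat,
          Subsingleton.elim j (0 : Fin 1), (Fin.castSucc_lt_last i).ne]
    | inr i =>
      cases j with
      | inl j =>
        simp [Matrix.submatrix_apply, hc, hnat, Subsingleton.elim i (0 : Fin 1)]
      | inr j =>
        simp [Matrix.submatrix_apply, hc, hnat, Subsingleton.elim i (0 : Fin 1),
          Subsingleton.elim j (0 : Fin 1)]
  have hdet : N.det = N (Fin.last n) (Fin.last n) := by
    rw [← Matrix.det_submatrix_equiv_self finSumFinEquiv, hNb,
      Matrix.det_fromBlocks_zero₁₂]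
    simp
  have hlast : N (Fin.last n) (Fin.last n) = -s⁻¹ := by
    have hw : dw n y (Pi.single (Fin.last n) (1:ℝ)) = -2 := by
      simp [dw, du_apply, Pi.single_apply, mul_ite, Finset.sum_ite_eq', eq_comm]
      ring
    simp [N, dtheta, LinearMap.toMatrix'_apply, hw, hs]
  rw [← LinearMap.det_toMatrix', ← hN, hdet, hlast]

lemma ww_phi (z : Fin (n+1) → ℝ) (hz : DD n z ≠ 0) :
    ww n (phi n z) = (uu n z - uu n z ^ 2) / DD n z ^ 2 := by
  have h1 : uu n (phi n z) = ((DD n z)⁻¹)^2 * uu n z := by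
    simp [uu, phi, Finset.mul_sum, mul_pow]
  have h2 : DD n z + z (Fin.last n) = uu n z := by rw [DD]; ring
  have h3 : (1 + (phi n z) (Fin.last n)) = (DD n z)⁻¹ * uu n z := by
    simp only [phi, Pi.smul_apply, smul_eq_mul]
    field_simp
    linarith [h2]
  rw [ww, h1, h3]
  field_simp

end S10

end

/-- On its domain `{0 < |x| < 1, |x|² ≠ x_{n+1}}`, `Ψ₁` is differentiable with Jacobian
determinant of absolute value `|x| / (||x|² − x_{n+1}|^{n+1} √(1 − |x|²))`; in particular the
Jacobian never vanishes. -/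
theorem stmt10 (n : ℕ) (hn : 2 ≤ n) (x : EuclideanSpace ℝ (Fin (n + 1)))
    (hx0 : 0 < ‖x‖) (hx1 : ‖x‖ < 1) (hxS : ‖x‖ ^ 2 ≠ x (Fin.last n)) :
    DifferentiableAt ℝ (Psi1 n) x ∧
    |(fderiv ℝ (Psi1 n) x).det| =
      ‖x‖ / (|‖x‖ ^ 2 - x (Fin.last n)| ^ (n + 1) * Real.sqrt (1 - ‖x‖ ^ 2)) ∧
    (fderiv ℝ (Psi1 n) x).det ≠ 0 := by
  classical
  set e : EuclideanSpace ℝ (Fin (n + 1)) ≃L[ℝ] (Fin (n+1) → ℝ) :=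
    PiLp.continuousLinearEquiv 2 ℝ (fun _ : Fin (n+1) => ℝ) with he
  have hee : ∀ (z : EuclideanSpace ℝ (Fin (n + 1))) (i : Fin (n+1)), e z i = z i :=
    fun z i => rfl
  have hee' : ∀ (w : Fin (n+1) → ℝ) (i : Fin (n+1)),
      (e.symm w : EuclideanSpace ℝ (Fin (n + 1))) i = w i := fun w i => rfl
  have hnorm : ∀ z : EuclideanSpace ℝ (Fin (n + 1)), ‖z‖ ^ 2 = S10.uu n (e z) := by
    intro z
    rw [EuclideanSpace.norm_eq, Real.sq_sqrt (by positivity)]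
    simp [S10.uu, Real.norm_eq_abs, sq_abs, hee]
  have hu0 : 0 < S10.uu n (e x) := by
    rw [← hnorm]; exact pow_pos hx0 2
  have hu1 : S10.uu n (e x) < 1 := by
    rw [← hnorm]
    simpa using pow_lt_one₀ (norm_nonneg x) hx1 (two_ne_zero)
  have hd : S10.DD n (e x) ≠ 0 := by
    have h : S10.uu n (e x) ≠ x (Fin.last n) := by rw [← hnorm x]; exact hxS
    exact sub_ne_zero.2 h
  -- the open set on which `Psi1` agrees with `theta ∘ phi`
  have hucont : Continuous fun z : EuclideanSpace ℝ (Fin (n + 1)) => S10.uu n (e z) := by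
    refine continuous_iff_continuousAt.2 fun z => ?_
    exact ((S10.hasFDerivAt_uu (e z)).comp z e.hasFDerivAt).differentiableAt.continuousAt
  have hDcont : Continuous fun z : EuclideanSpace ℝ (Fin (n + 1)) => S10.DD n (e z) := by
    refine continuous_iff_continuousAt.2 fun z => ?_
    exact ((S10.hasFDerivAt_DD (e z)).comp z e.hasFDerivAt).differentiableAt.continuousAt
  have hSopen : IsOpen {z : EuclideanSpace ℝ (Fin (n + 1)) |
      S10.DD n (e z) ≠ 0 ∧ S10.uu n (e z) < 1} := by
    have h1 : IsOpen ((fun z : EuclideanSpace ℝ (Fin (n + 1)) => S10.DD n (e z)) ⁻¹' {(0:ℝ)}ᶜ) :=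
      isOpen_compl_singleton.preimage hDcont
    have h2 : IsOpen ((fun z : EuclideanSpace ℝ (Fin (n + 1)) => S10.uu n (e z)) ⁻¹' Set.Iio 1) :=
      isOpen_Iio.preimage hucont
    exact h1.inter h2
  have hxmem : x ∈ {z : EuclideanSpace ℝ (Fin (n + 1)) |
      S10.DD n (e z) ≠ 0 ∧ S10.uu n (e z) < 1} := ⟨hd, hu1⟩
  have hequal : ∀ z ∈ {z : EuclideanSpace ℝ (Fin (n + 1)) |
      S10.DD n (e z) ≠ 0 ∧ S10.uu n (e z) < 1},
      e.symm (S10.theta n (S10.phi n (e z))) = Psi1 n z := by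
    rintro z ⟨hdz, huz⟩
    have huz0 : (0:ℝ) ≤ S10.uu n (e z) := by rw [← hnorm]; positivity
    ext i
    induction i using Fin.lastCases with
    | last =>
        have hwz := S10.ww_phi (e z) hdz
        have hz1 : Psi1 n z (Fin.last n) =
            ‖z‖ * Real.sqrt (1 - ‖z‖ ^ 2) / |‖z‖ ^ 2 - z (Fin.last n)| := by
          simp [Psi1]
        have hz2 : e.symm (S10.theta n (S10.phi n (e z))) (Fin.last n) =
            Real.sqrt (S10.ww n (S10.phi n (e z))) := by
          rw [hee']
          simp [S10.theta]
        rw [hz1, hz2, hwz]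
        rw [show S10.uu n (e z) - S10.uu n (e z) ^ 2
            = S10.uu n (e z) * (1 - S10.uu n (e z)) by ring]
        rw [Real.sqrt_div (by nlinarith) _, Real.sqrt_mul huz0, Real.sqrt_sq_eq_abs]
        have hnz : ‖z‖ = Real.sqrt (S10.uu n (e z)) := by
          rw [← hnorm z, Real.sqrt_sq (norm_nonneg z)]
        have hDDz : ((S10.DD n (e z)) : ℝ) = S10.uu n (e z) - z (Fin.last n) := rfl
        rw [hnorm z, hnz, ← hDDz]
    | cast j =>
        have hz1 : Psi1 n z (Fin.castSucc j) =
            z j.castSucc / (‖z‖ ^ 2 - z (Fin.last n)) := by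
          simp [Psi1]
        have hz2 : e.symm (S10.theta n (S10.phi n (e z))) (Fin.castSucc j) =
            (S10.DD n (e z))⁻¹ * z j.castSucc := by
          rw [hee']
          simp [S10.theta, S10.phi, hee]
        have hDDz : ((S10.DD n (e z)) : ℝ) = S10.uu n (e z) - z (Fin.last n) := rfl
        rw [hz1, hz2, hnorm z, ← hDDz, div_eq_inv_mul]
  have hEvEq : (fun z : EuclideanSpace ℝ (Fin (n + 1)) =>
      e.symm (S10.theta n (S10.phi n (e z)))) =ᶠ[nhds x] Psi1 n :=
    Filter.eventually_of_mem (hSopen.mem_nhds hxmem) hequal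
  set y := S10.phi n (e x) with hy
  have hwval : S10.ww n y = (S10.uu n (e x) - S10.uu n (e x) ^ 2) / S10.DD n (e x) ^ 2 :=
    S10.ww_phi (e x) hd
  have hwpos : 0 < S10.ww n y := by
    rw [hwval]
    exact div_pos (by nlinarith) (by positivity)
  set B : EuclideanSpace ℝ (Fin (n + 1)) →L[ℝ] EuclideanSpace ℝ (Fin (n + 1)) :=
    ((e.symm : (Fin (n+1) → ℝ) →L[ℝ] EuclideanSpace ℝ (Fin (n + 1))).comp
      ((S10.dtheta n y).comp ((S10.dphi n (e x)).comp
        (e : EuclideanSpace ℝ (Fin (n + 1)) →L[ℝ] (Fin (n+1) → ℝ))))) with hBdef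
  have hB : HasFDerivAt (Psi1 n) B x := by
    have h1 : HasFDerivAt (fun z : EuclideanSpace ℝ (Fin (n + 1)) => S10.phi n (e z))
        ((S10.dphi n (e x)).comp
          (e : EuclideanSpace ℝ (Fin (n + 1)) →L[ℝ] (Fin (n+1) → ℝ))) x :=
      (S10.hasFDerivAt_phi (e x) hd).comp x e.hasFDerivAt
    have h2 : HasFDerivAt (fun z : EuclideanSpace ℝ (Fin (n + 1)) =>
        S10.theta n (S10.phi n (e z)))
        ((S10.dtheta n y).comp ((S10.dphi n (e x)).comp
          (e : EuclideanSpace ℝ (Fin (n + 1)) →L[ℝ] (Fin (n+1) → ℝ)))) x :=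
      by have := (S10.hasFDerivAt_theta y hwpos.ne').comp x h1; exact this
    have h3 : HasFDerivAt (fun z : EuclideanSpace ℝ (Fin (n + 1)) =>
        e.symm (S10.theta n (S10.phi n (e z)))) B x :=
      (e.symm.hasFDerivAt).comp x h2
    exact h3.congr_of_eventuallyEq hEvEq.symm
  have hfd : fderiv ℝ (Psi1 n) x = B := hB.fderiv
  have hconj : ((B : EuclideanSpace ℝ (Fin (n + 1)) →L[ℝ] EuclideanSpace ℝ (Fin (n + 1))) :
      EuclideanSpace ℝ (Fin (n + 1)) →ₗ[ℝ] EuclideanSpace ℝ (Fin (n + 1))) =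
      (e.symm.toLinearEquiv : (Fin (n+1) → ℝ) →ₗ[ℝ] EuclideanSpace ℝ (Fin (n + 1))) ∘ₗ
        ((((S10.dtheta n y).comp (S10.dphi n (e x))) :
          (Fin (n+1) → ℝ) →L[ℝ] (Fin (n+1) → ℝ)) :
          (Fin (n+1) → ℝ) →ₗ[ℝ] (Fin (n+1) → ℝ)) ∘ₗ
        ((e.symm.toLinearEquiv.symm : EuclideanSpace ℝ (Fin (n + 1)) →ₗ[ℝ] (Fin (n+1) → ℝ))) := by
    rfl
  have hdetB : B.det =
      -(Real.sqrt (S10.ww n y))⁻¹ * (-(S10.uu n (e x)) / S10.DD n (e x) ^ (n+2)) := by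
    rw [ContinuousLinearMap.det, hconj, LinearMap.det_conj,
      ContinuousLinearMap.toLinearMap_comp, LinearMap.det_comp,
      S10.det_dtheta, S10.det_dphi (e x) hd]
  have hsu : (0:ℝ) < Real.sqrt (S10.uu n (e x)) := Real.sqrt_pos.2 hu0
  have hs1 : (0:ℝ) < Real.sqrt (1 - S10.uu n (e x)) := Real.sqrt_pos.2 (by linarith)
  have hda : (0:ℝ) < |S10.DD n (e x)| := abs_pos.2 hd
  have hsq : Real.sqrt (S10.ww n y) =
      Real.sqrt (S10.uu n (e x)) * Real.sqrt (1 - S10.uu n (e x)) / |S10.DD n (e x)| := by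
    rw [hwval, show S10.uu n (e x) - S10.uu n (e x) ^ 2
        = S10.uu n (e x) * (1 - S10.uu n (e x)) by ring,
      Real.sqrt_div (by nlinarith) _, Real.sqrt_mul hu0.le, Real.sqrt_sq_eq_abs]
  refine ⟨hB.differentiableAt, ?_, ?_⟩
  · rw [hfd, hdetB, hsq]
    have hx2 : ‖x‖ = Real.sqrt (S10.uu n (e x)) := by
      rw [← Real.sqrt_sq (norm_nonneg x), hnorm x]
    have habs : |‖x‖ ^ 2 - x (Fin.last n)| = |S10.DD n (e x)| := by rw [hnorm x]; rfl
    have hgoal1 : Real.sqrt (1 - ‖x‖ ^ 2) = Real.sqrt (1 - S10.uu n (e x)) := by rw [hnorm x]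
    rw [habs, hgoal1, hx2]
    rw [abs_mul, abs_neg, abs_inv,
      abs_of_nonneg (show (0:ℝ) ≤ Real.sqrt (S10.uu n (e x)) * Real.sqrt (1 - S10.uu n (e x)) /
        |S10.DD n (e x)| by positivity),
      abs_div, abs_neg, abs_of_pos hu0, abs_pow]
    rw [inv_div, div_mul_div_comm, div_eq_div_iff (by positivity) (by positivity)]
    have h2 : Real.sqrt (S10.uu n (e x)) * Real.sqrt (S10.uu n (e x)) = S10.uu n (e x) :=
      Real.mul_self_sqrt hu0.le
    linear_combination (-(Real.sqrt (1 - S10.uu n (e x))) * |S10.DD n (e x)| ^ (n+2)) * h2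
  · rw [hfd, hdetB]
    refine mul_ne_zero (neg_ne_zero.2 (inv_ne_zero ?_)) (div_ne_zero ?_ ?_)
    · exact ne_of_gt (Real.sqrt_pos.2 hwpos)
    · exact neg_ne_zero.2 hu0.ne'
    · exact pow_ne_zero _ hd
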